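/- Let F be a finite field with q elements whose characteristic p satisfies p ≥ 7 and p ≡ 1 (mod 3). Then for every multiplicative character χ of F of order 3, every nontrivial additive character ψ of F, and every integer n ≥ 1, one has (gaussSum χ ψ)^{2n} ≠ q^n in ℂ. Equivalently, the normalized Gauss sum gaussSum χ ψ / √q is not a root of unity, i.e. the Gauss angle φ with gaussSum χ ψ = √q·e^{iφ} is not a rational multiple of π. -/

import Mathlib

open Polynomial in
lemma aux_transfer {ω : ℂ} (hω : ω^2 + ω + 1 = 0) {S : Type*} [CommRing S]
    {w : S} (hw : w^2 + w + 1 = 0) {P : ℤ[X]} (hP : aeval ω P = 0) :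
    aeval w P = 0 := by
  set m : ℤ[X] := X^2 + X + 1 with hm
  have hmonic : m.Monic := by
    have h : m = X^2 + (X + 1) := by ring
    rw [h]
    apply monic_X_pow_add
    calc degree ((X:ℤ[X]) + 1) ≤ 1 := by
          simpa using degree_X_add_C (1:ℤ) ▸ le_refl _
      _ < 2 := by decide
  have hrep : P %ₘ m + m * (P /ₘ m) = P := modByMonic_add_div P m
  have hdeg : (P %ₘ m).natDegree ≤ 1 := by
    have h2 : m.degree = 2 := by
      have h : m = C 1 * X^2 + C 1 * X + C 1 := by simp [hm]
      rw [h]; exact degree_quadratic one_ne_zero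
    have := degree_modByMonic_lt P hmonic
    rw [h2] at this
    apply natDegree_le_iff_degree_le.mpr
    refine Order.le_of_lt_succ ?_
    exact_mod_cast this
  set a : ℤ := (P %ₘ m).coeff 1
  set b : ℤ := (P %ₘ m).coeff 0
  have hXC : P %ₘ m = C a * X + C b := eq_X_add_C_of_natDegree_le_one hdeg
  have hmω : aeval ω m = 0 := by simp [hm]; linear_combination hω
  have hlin : (a : ℂ) * ω + b = 0 := by
    have := congrArg (aeval ω) hrep
    rw [map_add, map_mul, hmω, zero_mul, add_zero, hXC] at this
    rw [hP] at this
    simpa using this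
  have hZ : ((b^2 - a*b + a^2 : ℤ) : ℂ) = 0 := by
    push_cast
    linear_combination ((a:ℂ)^2) * hω + (-(a:ℂ)*ω + (b:ℂ) - (a:ℂ)) * hlin
  have hZ' : b^2 - a*b + a^2 = 0 := by exact_mod_cast hZ
  have ha : a = 0 := by nlinarith [sq_nonneg (2*b - a), sq_nonneg a]
  have hb : b = 0 := by nlinarith [sq_nonneg b]
  have hmod0 : P %ₘ m = 0 := by rw [hXC, ha, hb]; simp
  have hmw : aeval w m = 0 := by simp [hm]; linear_combination hw
  have := congrArg (aeval w) hrep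
  rw [map_add, map_mul, hmw, zero_mul, hmod0, map_zero, zero_add] at this
  exact this.symm

lemma aux_choose {p f : ℕ} (hp : p.Prime) (hp1 : p % 3 = 1) :
    ¬ p ∣ Nat.choose (2 * ((p ^ f - 1) / 3)) ((p ^ f - 1) / 3) := by
  have : Fact p.Prime := ⟨hp⟩
  have hp2 : 2 ≤ p := hp.two_le
  have hdvd : ∀ i : ℕ, 3 * ((p ^ i - 1) / 3) = p ^ i - 1 := by
    intro i
    apply Nat.mul_div_cancel'
    have h1 : p ^ i % 3 = 1 := by
      rw [Nat.pow_mod, hp1, Nat.one_pow]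
    have h2 : 1 ≤ p ^ i := Nat.one_le_pow _ _ (by omega)
    omega
  set a := (p ^ f - 1) / 3 with ha
  have key : ∀ i : ℕ, 1 ≤ i → a % p ^ i + a % p ^ i < p ^ i := by
    intro i hi
    have hPi : 1 ≤ p ^ i := Nat.one_le_pow _ _ (by omega)
    have hdi := hdvd i
    set di := (p ^ i - 1) / 3 with hdi'
    have hle : a % p ^ i ≤ di := by
      rcases le_or_gt i f with h | h
      · have hsplit : a = di + p ^ i * ((p ^ (f - i) - 1) / 3) := by
          have h1 := hdvd f
          have h3 : p ^ i * p ^ (f - i) = p ^ f := by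
            rw [← pow_add, Nat.add_sub_cancel' h]
          have h4 : 1 ≤ p ^ (f - i) := Nat.one_le_pow _ _ (by omega)
          apply Nat.eq_of_mul_eq_mul_left (show 0 < 3 by norm_num)
          rw [Nat.mul_add, hdvd i, Nat.mul_left_comm, hdvd (f - i), h1]
          have h5 : p ^ i * (p ^ (f - i) - 1) = p ^ f - p ^ i := by
            rw [Nat.mul_sub, h3, Nat.mul_one]
          rw [h5]
          have h6 : p ^ i ≤ p ^ f := h3 ▸ Nat.le_mul_of_pos_right _ (by omega)
          omega
        rw [hsplit, Nat.add_mul_mod_self_left, Nat.mod_eq_of_lt (by omega)]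
      · have h6 : p ^ f ≤ p ^ i := Nat.pow_le_pow_right (by omega) (by omega)
        have h1 := hdvd f
        rw [Nat.mod_eq_of_lt (by omega)]
        omega
    omega
  have h2a : 2 * a = a + a := by omega
  intro hdvd'
  have hpos : 0 < Nat.choose (a + a) a := Nat.choose_pos (by omega)
  have h1 := one_le_padicValNat_of_dvd hpos.ne' (h2a ▸ hdvd')
  have h0 : padicValNat p (Nat.choose (a + a) a) = 0 := by
    rw [padicValNat_choose' (b := Nat.log p (a + a) + 1) (Nat.lt_succ_self _)]
    convert Finset.card_empty
    rw [Finset.filter_eq_empty_iff]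
    intro i hi
    simp only [Finset.mem_Ico] at hi
    have := key i hi.1
    omega
  omega

lemma aux_sum_pow_card_sub_one (K : Type*) [Field K] [Fintype K] :
    ∑ x : K, x ^ (Fintype.card K - 1) = -1 := by
  classical
  have h1 : 1 < Fintype.card K := Fintype.one_lt_card
  let φ : Kˣ ↪ K := ⟨fun x ↦ x, Units.val_injective⟩
  have huniv : (Finset.univ.map φ) = Finset.univ \ {0} := by
    ext x
    simpa only [Finset.mem_map, Finset.mem_univ, Function.Embedding.coeFn_mk, true_and,
      Finset.mem_sdiff, Finset.mem_singleton, φ] using show (∃ a : Kˣ, (a : K) = x) ↔ x ≠ 0 from isUnit_iff_ne_zero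
  calc
    ∑ x : K, x ^ (Fintype.card K - 1)
        = ∑ x ∈ Finset.univ \ {(0 : K)}, x ^ (Fintype.card K - 1) := by
      rw [← Finset.sum_sdiff ({0} : Finset K).subset_univ, Finset.sum_singleton,
        zero_pow (by omega), add_zero]
    _ = ∑ x : Kˣ, (x : K) ^ (Fintype.card K - 1) := by
      rw [← huniv, Finset.sum_map]
      rfl
    _ = -1 := by
      have := FiniteField.sum_pow_units K (Fintype.card K - 1)
      rw [if_pos dvd_rfl] at this
      exact_mod_cast this

/-- For a finite field `F` with `q` elements of characteristic `p ≥ 7` with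
`p ≡ 1 (mod 3)`, the normalized Gauss sum of a character of order 3 is not a root of
unity: `(gaussSum χ ψ)^(2n) ≠ q^n` for every `n ≥ 1`. -/
theorem stmt_6 (p : ℕ) (hp : p.Prime) (hp7 : 7 ≤ p) (hp1 : p % 3 = 1)
    (F : Type*) [Field F] [Fintype F] [CharP F p]
    (χ : MulChar F ℂ) (hχ : orderOf χ = 3)
    (ψ : AddChar F ℂ) (hψ : ∃ x, ψ x ≠ 1)
    (n : ℕ) (hn : 1 ≤ n) :
    (gaussSum χ ψ) ^ (2 * n) ≠ (Fintype.card F : ℂ) ^ n := by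
  classical
  intro hEq
  obtain ⟨f, hpp, hcard⟩ := FiniteField.card F p
  set q := Fintype.card F with hq
  have hq7 : 7 ≤ q := by
    rw [hcard]
    calc 7 ≤ p := hp7
    _ ≤ p ^ (f : ℕ) := Nat.le_self_pow (by exact_mod_cast f.ne_zero) p
  -- 3 ∣ q - 1
  have h3q : 3 * ((q - 1) / 3) = q - 1 := by
    apply Nat.mul_div_cancel'
    have h1 : q % 3 = 1 := by
      rw [hcard, Nat.pow_mod, hp1, Nat.one_pow]
    omega
  set a := (q - 1) / 3 with ha
  have ha2 : 2 ≤ a := by omega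
  set M := 2 * a with hM
  -- characters
  have hψprim : ψ.IsPrimitive := by
    apply AddChar.IsPrimitive.of_ne_one
    intro h
    obtain ⟨x, hx⟩ := hψ
    exact hx (by rw [h]; rfl)
  have hχ3 : χ ^ 3 = 1 := by rw [← hχ]; exact pow_orderOf_eq_one χ
  have hχ1 : χ ≠ 1 := by
    intro h
    rw [h, orderOf_one] at hχ
    omega
  -- Gauss sum cube
  have hgm1 : χ (-1) = 1 := by
    have h2 : χ (-1) ^ 2 = 1 := by
      rw [← map_pow]
      norm_num
    have h3 : χ (-1) ^ 3 = 1 := by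
      rw [← MulChar.pow_apply' χ (by norm_num), hχ3]
      exact MulChar.one_apply_coe (-1)
    calc χ (-1) = χ (-1) ^ 3 := by rw [pow_succ, h2, one_mul]
    _ = 1 := h3
  have hg3 : gaussSum χ ψ ^ 3 = (q : ℂ) * jacobiSum χ χ := by
    have := gaussSum_pow_eq_prod_jacobiSum (χ := χ) (ψ := ψ) (by omega) hψprim
    rw [hχ, hgm1, one_mul] at this
    rw [this]
    norm_num
    exact Or.inl rfl
  -- Jacobi sum power identity
  have hq0 : (q : ℂ) ≠ 0 := by
    exact_mod_cast (by omega : q ≠ 0)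
  have hJ : jacobiSum χ χ ^ (2 * n) = (q : ℂ) ^ n := by
    have h1 : ((q : ℂ) * jacobiSum χ χ) ^ (2 * n) = ((q : ℂ) ^ n) ^ 3 := by
      rw [← hg3, ← pow_mul, ← hEq, ← pow_mul]
      ring
    rw [mul_pow] at h1
    have h2 : ((q:ℂ) ^ (2*n)) * jacobiSum χ χ ^ (2*n) = ((q:ℂ) ^ (2*n)) * (q:ℂ) ^ n := by
      rw [h1, ← pow_mul, ← pow_add]
      ring_nf
    exact mul_left_cancel₀ (pow_ne_zero _ hq0) h2
  -- generator and discrete log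
  obtain ⟨g, hg⟩ := IsCyclic.exists_generator (α := Fˣ)
  have hgord : orderOf g = q - 1 := by
    rw [orderOf_eq_card_of_forall_mem_zpowers hg, Nat.card_eq_fintype_card, Fintype.card_units]
  have hdlog : ∀ x : Fˣ, ∃ j : ℕ, g ^ j = x := by
    intro x
    have := hg x
    rwa [← mem_powers_iff_mem_zpowers, Submonoid.mem_powers_iff] at this
  choose dl hdl using hdlog
  set b : F → ℕ := fun x => if h : x = 0 then 0 else dl (Units.mk0 x h) with hb
  set ω : ℂ := χ (g : F) with hω'
  -- χ x = ω ^ b x for x ≠ 0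
  have hχx : ∀ x : F, x ≠ 0 → χ x = ω ^ b x := by
    intro x hx
    rw [hb]
    simp only [dif_neg hx]
    set u := Units.mk0 x hx with hu
    have h1 : ((g ^ dl u : Fˣ) : F) = x := by rw [hdl u, hu]; rfl
    set j := dl u with hj
    rw [← h1]
    push_cast
    rw [map_pow]
  -- ω facts
  have hω3 : ω ^ 3 = 1 := by
    rw [hω', ← MulChar.pow_apply' χ (by norm_num), hχ3]
    exact MulChar.one_apply_coe g
  have hω1 : ω ≠ 1 := by
    intro h
    apply hχ1
    apply MulChar.ext
    intro x
    rw [MulChar.one_apply_coe, ← hdl x]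
    push_cast
    rw [map_pow, ← hω', h, one_pow]
  have hωq : ω ^ 2 + ω + 1 = 0 := by
    have h1 : (ω - 1) * (ω ^ 2 + ω + 1) = 0 := by
      linear_combination hω3
    rcases mul_eq_zero.mp h1 with h | h
    · exact absurd (sub_eq_zero.mp h) hω1
    · exact h
  -- w facts
  set W : Fˣ := g ^ M with hW
  set w : F := (W : F) with hw'
  have hW3 : W ^ 3 = 1 := by
    rw [hW, ← pow_mul]
    have hMq : M * 3 = (q - 1) * 2 := by omega
    rw [hMq, pow_mul, ← hgord, pow_orderOf_eq_one, one_pow]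
  have hw3 : w ^ 3 = 1 := by
    rw [hw', ← Units.val_pow_eq_pow_val, hW3, Units.val_one]
  have hw1 : w ≠ 1 := by
    intro h
    have hW1 : W = 1 := Units.val_eq_one.mp h
    rw [hW] at hW1
    have := orderOf_dvd_of_pow_eq_one hW1
    rw [hgord] at this
    have := Nat.le_of_dvd (by omega) this
    omega
  have hwq : w ^ 2 + w + 1 = 0 := by
    have h1 : (w - 1) * (w ^ 2 + w + 1) = 0 := by
      linear_combination hw3
    rcases mul_eq_zero.mp h1 with h | h
    · exact absurd (sub_eq_zero.mp h) hw1
    · exact h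
  -- x ^ M = w ^ b x for x ≠ 0
  have hwx : ∀ x : F, x ≠ 0 → x ^ M = w ^ b x := by
    intro x hx
    rw [hb]
    simp only [dif_neg hx]
    set u := Units.mk0 x hx with hu
    have h1 : ((g ^ dl u : Fˣ) : F) = x := by rw [hdl u, hu]; rfl
    set j := dl u with hj
    rw [← h1, hw', hW]
    push_cast
    rw [← pow_mul, ← pow_mul]
    ring_nf
  -- the polynomial
  set T : Finset F := Finset.univ.filter (fun x : F => x ≠ 0 ∧ x ≠ 1) with hT
  set P : Polynomial ℤ := ∑ x ∈ T, Polynomial.X ^ (b x + b (1 - x)) with hP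
  have hsub : ∀ x ∈ T, (1 : F) - x ≠ 0 := by
    intro x hx
    rw [hT, Finset.mem_filter] at hx
    exact sub_ne_zero.mpr (Ne.symm hx.2.2)
  have hPω : Polynomial.aeval ω P = jacobiSum χ χ := by
    rw [hP, map_sum, jacobiSum]
    rw [← Finset.sum_subset (Finset.subset_univ T)]
    · apply Finset.sum_congr rfl
      intro x hx
      rw [hT, Finset.mem_filter] at hx
      rw [hχx x hx.2.1, hχx (1 - x) (sub_ne_zero.mpr (Ne.symm hx.2.2)), ← pow_add]
      simp
    · intro x _ hx
      rw [hT, Finset.mem_filter] at hx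
      simp only [Finset.mem_univ, true_and] at hx
      rcases not_and_or.mp hx with h | h
      · rw [not_ne_iff.mp h, MulChar.map_zero, zero_mul]
      · rw [not_ne_iff.mp h, sub_self, MulChar.map_zero, mul_zero]
  have hPw : Polynomial.aeval w P = ∑ x : F, x ^ M * (1 - x) ^ M := by
    rw [hP, map_sum]
    rw [← Finset.sum_subset (Finset.subset_univ T)]
    · apply Finset.sum_congr rfl
      intro x hx
      rw [hT, Finset.mem_filter] at hx
      rw [hwx x hx.2.1, hwx (1 - x) (sub_ne_zero.mpr (Ne.symm hx.2.2)), ← pow_add]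
      simp
    · intro x _ hx
      rw [hT, Finset.mem_filter] at hx
      simp only [Finset.mem_univ, true_and] at hx
      rcases not_and_or.mp hx with h | h
      · rw [not_ne_iff.mp h, zero_pow (by omega : M ≠ 0), zero_mul]
      · rw [not_ne_iff.mp h, sub_self, zero_pow (by omega : M ≠ 0), mul_zero]
  -- transfer
  set Q : Polynomial ℤ := P ^ (2 * n) - Polynomial.C ((q : ℤ)) ^ n with hQ
  have hQω : Polynomial.aeval ω Q = 0 := by
    rw [hQ, map_sub, map_pow, map_pow, hPω, hJ, Polynomial.aeval_C]
    push_cast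
    ring
  have hQw : Polynomial.aeval w Q = 0 := aux_transfer hωq hwq hQω
  have hE : (∑ x : F, x ^ M * (1 - x) ^ M) = 0 := by
    rw [hQ, map_sub, map_pow, map_pow, hPw, Polynomial.aeval_C] at hQw
    have hqF : (algebraMap ℤ F) ((q : ℕ) : ℤ) = 0 := by
      rw [map_natCast]
      exact FiniteField.cast_card_eq_zero F
    rw [hqF, zero_pow (by omega : n ≠ 0), sub_zero] at hQw
    exact pow_eq_zero_iff (by omega : 2 * n ≠ 0) |>.mp hQw
  -- evaluate the sum
  have hexpand : (∑ x : F, x ^ M * (1 - x) ^ M) =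
      ∑ j ∈ Finset.range (M + 1), (-1 : F) ^ j * (Nat.choose M j : F) * ∑ x : F, x ^ (M + j) := by
    have h1 : ∀ x : F, x ^ M * (1 - x) ^ M =
        ∑ j ∈ Finset.range (M + 1), (-1 : F) ^ j * (Nat.choose M j : F) * x ^ (M + j) := by
      intro x
      have h2 : (1 : F) - x = -x + 1 := by ring
      rw [h2, add_pow, Finset.mul_sum]
      apply Finset.sum_congr rfl
      intro j hj
      rw [neg_pow x j]
      ring
    rw [Finset.sum_congr rfl (fun x _ => h1 x), Finset.sum_comm]
    apply Finset.sum_congr rfl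
    intro j _
    rw [Finset.mul_sum]
  have hSsum : ∀ j ∈ Finset.range (M + 1), (∑ x : F, x ^ (M + j)) = if j = a then (-1 : F) else 0 := by
    intro j hj
    rw [Finset.mem_range] at hj
    rcases lt_trichotomy j a with h | h | h
    · rw [if_neg (by omega)]
      exact FiniteField.sum_pow_lt_card_sub_one F (M + j) (by omega)
    · rw [if_pos h]
      have : M + j = q - 1 := by omega
      rw [this]
      exact aux_sum_pow_card_sub_one F
    · rw [if_neg (by omega)]
      have hptw : ∀ x : F, x ^ (M + j) = x ^ (j - a) := by
        intro x
        rcases eq_or_ne x 0 with rfl | hx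
        · rw [zero_pow (by omega), zero_pow (by omega)]
        · have : M + j = (q - 1) + (j - a) := by omega
          rw [this, pow_add, FiniteField.pow_card_sub_one_eq_one x hx, one_mul]
      rw [Finset.sum_congr rfl (fun x _ => hptw x)]
      exact FiniteField.sum_pow_lt_card_sub_one F (j - a) (by omega)
  have hEval : (∑ x : F, x ^ M * (1 - x) ^ M) = (-1 : F) ^ a * (Nat.choose M a : F) * (-1) := by
    rw [hexpand, Finset.sum_congr rfl (fun j hj => by rw [hSsum j hj])]
    rw [Finset.sum_eq_single a]
    · rw [if_pos rfl]
    · intro j _ hja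
      rw [if_neg hja, mul_zero]
    · intro h
      exact absurd (Finset.mem_range.mpr (by omega)) h
  rw [hE] at hEval
  have hchoose0 : (Nat.choose M a : F) = 0 := by
    have hne : ((-1 : F) ^ a) ≠ 0 := pow_ne_zero _ (by norm_num)
    field_simp at hEval
    rcases mul_eq_zero.mp (neg_eq_zero.mp hEval.symm) with h | h
    · exact absurd h hne
    · exact h
  have hpd : p ∣ Nat.choose M a := (CharP.cast_eq_zero_iff F p _).mp hchoose0
  have haq : (p ^ (f : ℕ) - 1) / 3 = a := by rw [ha, hcard]
  exact aux_choose (f := (f : ℕ)) hp hp1 (by rw [haq]; exact hpd)
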